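/- For all positive integers n, nonnegative integers m₁, ..., mₙ, and nonzero real x₁, ..., xₙ with S := Σ_{t} ∏_{j≠t} x_j ≠ 0: x₁^(m₁+1) ⋯ xₙ^(mₙ+1) = Σ_{t=1}^{n} Σ_{0 ≤ i_j ≤ m_j, j ≠ t} [((Σ_{j≠t} i_j) + m_t)! / (m_t! ∏_{j≠t} i_j!)] · (∏_{j≠t} x_j^(m_j - i_j + 1)) · (P/S)^((Σ_{j≠t} i_j) + m_t + 1), where P = x₁⋯xₙ. -/

import Mathlib

open Finset

namespace NVH

lemma facR_ne {a : ℕ} : ((Nat.factorial a : ℕ) : ℝ) ≠ 0 := by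
  exact_mod_cast Nat.factorial_ne_zero a

lemma prod_facR_ne {n : ℕ} (s : Finset (Fin n)) (k : Fin n → ℕ) :
    (∏ l ∈ s, (Nat.factorial (k l) : ℝ)) ≠ 0 :=
  Finset.prod_ne_zero_iff.mpr fun _ _ => facR_ne

lemma pascalR {n : ℕ} (k : Fin n → ℕ) (h : 0 < ∑ j, k j) :
    ((Nat.factorial (∑ j, k j) : ℝ) / ∏ j, (Nat.factorial (k j) : ℝ))
      = ∑ j, if k j = 0 then 0 else
          ((Nat.factorial ((∑ j, k j) - 1) : ℝ) /
            ∏ l, (Nat.factorial (Function.update k j (k j - 1) l) : ℝ)) := by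
  have hN : (∑ j, k j) = ((∑ j, k j) - 1) + 1 := (Nat.succ_pred_eq_of_pos h).symm
  have step1 : ((Nat.factorial (∑ j, k j) : ℕ) : ℝ)
      = (∑ j, (k j : ℝ)) * (Nat.factorial ((∑ j, k j) - 1) : ℕ) := by
    conv_lhs => rw [hN]
    rw [Nat.factorial_succ, ← hN]
    push_cast
    ring
  rw [step1, div_eq_iff (prod_facR_ne _ _), Finset.sum_mul, Finset.sum_mul]
  refine Finset.sum_congr rfl fun j _ => ?_
  by_cases hj : k j = 0
  · simp [hj]
  · rw [if_neg hj]
    have h2 : ∏ l, (Nat.factorial (Function.update k j (k j - 1) l) : ℝ)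
        = (Nat.factorial (k j - 1) : ℝ) * ∏ l ∈ univ.erase j, (Nat.factorial (k l) : ℝ) := by
      rw [← Finset.mul_prod_erase _ _ (mem_univ j)]
      congr 1
      · simp
      · exact Finset.prod_congr rfl fun l hl => by
          rw [Function.update_of_ne (Finset.mem_erase.mp hl).1]
    have h1 : ∏ l, (Nat.factorial (k l) : ℝ)
        = (Nat.factorial (k j) : ℝ) * ∏ l ∈ univ.erase j, (Nat.factorial (k l) : ℝ) :=
      (Finset.mul_prod_erase _ _ (mem_univ j)).symm
    have h3 : ((Nat.factorial (k j) : ℕ) : ℝ) = (k j : ℝ) * (Nat.factorial (k j - 1) : ℕ) := by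
      conv_lhs => rw [show k j = (k j - 1) + 1 from (Nat.succ_pred_eq_of_pos (Nat.pos_of_ne_zero hj)).symm]
      rw [Nat.factorial_succ]
      push_cast
      rw [Nat.cast_sub (Nat.one_le_iff_ne_zero.mpr hj)]
      push_cast
      ring
    rw [div_mul_eq_mul_div, eq_div_iff (prod_facR_ne _ _), h2, h1, h3]
    ring

variable {n : ℕ}

noncomputable def coef (m : Fin n → ℕ) (t : Fin n) (i : Fin n → ℕ) : ℝ :=
  (Nat.factorial ((∑ j ∈ Finset.univ.erase t, i j) + m t) : ℝ) /
    ((Nat.factorial (m t) : ℝ) * ∏ j ∈ Finset.univ.erase t, (Nat.factorial (i j) : ℝ))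

def Idx (m : Fin n → ℕ) (t : Fin n) : Finset (Fin n → ℕ) :=
  Fintype.piFinset (fun j => Finset.range (if j = t then 1 else m j + 1))

lemma mem_Idx {m : Fin n → ℕ} {t : Fin n} {i : Fin n → ℕ} :
    i ∈ Idx m t ↔ (i t = 0 ∧ ∀ j, j ≠ t → i j ≤ m j) := by
  simp only [Idx, Fintype.mem_piFinset, Finset.mem_range]
  constructor
  · intro h
    refine ⟨by simpa using h t, fun j hj => ?_⟩
    have := h j
    rw [if_neg hj] at this
    omega
  · intro ⟨h0, h1⟩ j
    by_cases hj : j = t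
    · subst hj; simp [h0]
    · rw [if_neg hj]; exact Nat.lt_succ_of_le (h1 j hj)

lemma Idx_update_self (m : Fin n → ℕ) (t : Fin n) (v : ℕ) :
    Idx (Function.update m t v) t = Idx m t := by
  unfold Idx
  congr 1
  funext l
  by_cases hl : l = t
  · simp [hl]
  · rw [Function.update_of_ne hl]

noncomputable def T (y : Fin n → ℝ) (m : Fin n → ℕ) (t : Fin n) : ℝ :=
  ∑ i ∈ Idx m t, coef m t i * (y t ^ (m t + 1) * ∏ j ∈ Finset.univ.erase t, y j ^ i j)


lemma sum_idx_shift (m : Fin n → ℕ) (t j : Fin n) (hj : j ≠ t) (hmj : m j ≠ 0)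
    (G : (Fin n → ℕ) → ℝ) :
    (∑ i ∈ Idx m t, if i j = 0 then 0 else G i)
      = ∑ i ∈ Idx (Function.update m j (m j - 1)) t, G (Function.update i j (i j + 1)) := by
  rw [show (∑ i ∈ Idx m t, if i j = 0 then 0 else G i)
      = ∑ i ∈ (Idx m t).filter (fun i => ¬ (i j = 0)), G i by
    rw [Finset.sum_filter]
    exact Finset.sum_congr rfl fun i _ => by by_cases h : i j = 0 <;> simp [h]]
  refine Finset.sum_nbij' (fun i => Function.update i j (i j - 1))
    (fun i => Function.update i j (i j + 1)) ?_ ?_ ?_ ?_ ?_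
  · intro i hi
    obtain ⟨hi, hij⟩ := Finset.mem_filter.mp hi
    obtain ⟨h0, h1⟩ := mem_Idx.mp hi
    refine mem_Idx.mpr ⟨?_, fun l hl => ?_⟩
    · rw [Function.update_of_ne (Ne.symm hj)]
      exact h0
    · by_cases hlj : l = j
      · subst hlj
        simp only [Function.update_self]
        have := h1 l hl
        omega
      · simp only [Function.update_of_ne hlj]
        exact h1 l hl
  · intro i hi
    obtain ⟨h0, h1⟩ := mem_Idx.mp hi
    refine Finset.mem_filter.mpr ⟨mem_Idx.mpr ⟨?_, fun l hl => ?_⟩, by simp⟩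
    · rw [Function.update_of_ne (Ne.symm hj)]
      exact h0
    · by_cases hlj : l = j
      · subst hlj
        simp only [Function.update_self]
        have := h1 l hl
        rw [Function.update_self] at this
        omega
      · rw [Function.update_of_ne hlj]
        have := h1 l hl
        rwa [Function.update_of_ne hlj] at this
  · intro i hi
    have hij := (Finset.mem_filter.mp hi).2
    funext l
    by_cases hlj : l = j
    · subst hlj
      simp only [Function.update_idem, Function.update_self]
      omega
    · simp [Function.update_of_ne hlj]
  · intro i hi
    funext l
    by_cases hlj : l = j
    · subst hlj
      simp [Function.update_idem]
    · simp [Function.update_of_ne hlj]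
  · intro i hi
    have hij := (Finset.mem_filter.mp hi).2
    congr 1
    funext l
    by_cases hlj : l = j
    · subst hlj
      simp only [Function.update_idem, Function.update_self]
      omega
    · simp [Function.update_of_ne hlj]


lemma key_term (y : Fin n → ℝ) (m : Fin n → ℕ) (t : Fin n) (i : Fin n → ℕ)
    (hi : i ∈ Idx m t) :
    coef m t i * (y t ^ (m t + 1) * ∏ j ∈ Finset.univ.erase t, y j ^ i j)
      = (if (∑ j ∈ Finset.univ.erase t, i j) + m t = 0 then y t else 0)
        + (if m t = 0 then 0 else
            y t * (coef (Function.update m t (m t - 1)) t i *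
              (y t ^ ((Function.update m t (m t - 1)) t + 1)
                * ∏ j ∈ Finset.univ.erase t, y j ^ i j)))
        + ∑ j ∈ Finset.univ.erase t, (if i j = 0 then 0 else
            y j * (coef (Function.update m j (m j - 1)) t (Function.update i j (i j - 1)) *
              (y t ^ (m t + 1)
                * ∏ l ∈ Finset.univ.erase t, y l ^ (Function.update i j (i j - 1) l)))) := by
  obtain ⟨hit, hile⟩ := mem_Idx.mp hi
  by_cases hN : (∑ j ∈ Finset.univ.erase t, i j) + m t = 0
  · -- base case
    have hmt : m t = 0 := by omega
    have hsum : ∑ j ∈ Finset.univ.erase t, i j = 0 := by omega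
    have hizero : ∀ j ∈ Finset.univ.erase t, i j = 0 :=
      fun j hj => (Finset.sum_eq_zero_iff.mp hsum) j hj
    rw [if_pos hN, if_pos hmt]
    have h1 : ∏ j ∈ Finset.univ.erase t, y j ^ i j = 1 :=
      Finset.prod_eq_one fun j hj => by rw [hizero j hj, pow_zero]
    have hc : coef m t i = 1 := by
      unfold coef
      rw [hN, hmt]
      have h3 : ∏ j ∈ Finset.univ.erase t, ((Nat.factorial (i j) : ℕ) : ℝ) = 1 :=
        Finset.prod_eq_one fun j hj => by rw [hizero j hj]; norm_num
      rw [h3]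
      norm_num
    rw [hc, h1, Finset.sum_eq_zero fun j hj => by rw [if_pos (hizero j hj)], hmt]
    ring
  · rw [if_neg hN]
    set k : Fin n → ℕ := fun l => if l = t then m t else i l with hk
    have hkt : k t = m t := by simp [hk]
    have hkne : ∀ l, l ≠ t → k l = i l := fun l hl => by simp [hk, hl]
    have hksum : ∑ l, k l = (∑ j ∈ Finset.univ.erase t, i j) + m t := by
      rw [← Finset.add_sum_erase _ k (Finset.mem_univ t), hkt,
        Finset.sum_congr rfl (fun l hl => hkne l (Finset.mem_erase.mp hl).1)]
      ring
    have hkprod : ∏ l, ((Nat.factorial (k l) : ℕ) : ℝ)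
        = ((Nat.factorial (m t) : ℕ) : ℝ) * ∏ j ∈ Finset.univ.erase t, ((Nat.factorial (i j) : ℕ) : ℝ) := by
      rw [← Finset.mul_prod_erase _ _ (Finset.mem_univ t), hkt]
      congr 1
      exact Finset.prod_congr rfl fun l hl => by rw [hkne l (Finset.mem_erase.mp hl).1]
    have hcoef : coef m t i = (Nat.factorial (∑ l, k l) : ℝ) / ∏ l, (Nat.factorial (k l) : ℝ) := by
      unfold coef
      rw [hksum, hkprod]
    have hpos : 0 < ∑ l, k l := by omega
    rw [hcoef, pascalR k hpos, ← Finset.add_sum_erase _ _ (Finset.mem_univ t), add_mul,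
      Finset.sum_mul, zero_add]
    congr 1
    · -- t-branch
      by_cases hmt : m t = 0
      · rw [if_pos (by rw [hkt]; exact hmt), if_pos hmt, zero_mul]
      · rw [if_neg (by rw [hkt]; exact hmt), if_neg hmt]
        have e0 : Function.update m t (m t - 1) t = m t - 1 := Function.update_self _ _ _
        have ecoef : coef (Function.update m t (m t - 1)) t i
            = (Nat.factorial ((∑ j ∈ Finset.univ.erase t, i j) + (m t - 1)) : ℝ) /
              ((Nat.factorial (m t - 1) : ℝ) * ∏ j ∈ Finset.univ.erase t, (Nat.factorial (i j) : ℝ)) := by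
          unfold coef
          rw [e0]
        have e1 : (∑ l, k l) - 1 = (∑ j ∈ Finset.univ.erase t, i j) + (m t - 1) := by omega
        have e2 : ∏ l, ((Nat.factorial (Function.update k t (k t - 1) l) : ℕ) : ℝ)
            = ((Nat.factorial (m t - 1) : ℕ) : ℝ)
              * ∏ j ∈ Finset.univ.erase t, ((Nat.factorial (i j) : ℕ) : ℝ) := by
          rw [← Finset.mul_prod_erase _ _ (Finset.mem_univ t), Function.update_self, hkt]
          congr 1
          exact Finset.prod_congr rfl fun l hl => by
            rw [Function.update_of_ne (Finset.mem_erase.mp hl).1, hkne l (Finset.mem_erase.mp hl).1]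
        have e3 : y t ^ (Function.update m t (m t - 1) t + 1) = y t ^ (m t) := by
          rw [e0]
          congr 1
          omega
        have e4 : y t ^ (m t + 1) = y t ^ (m t) * y t := pow_succ _ _
        rw [ecoef, e1, e2, e3, e4]
        ring
    · -- other branches
      refine Finset.sum_congr rfl fun l hl => ?_
      have hlt : l ≠ t := (Finset.mem_erase.mp hl).1
      have hkl : k l = i l := hkne l hlt
      by_cases hil : i l = 0
      · rw [if_pos (by rw [hkl]; exact hil), if_pos hil, zero_mul]
      · rw [if_neg (by rw [hkl]; exact hil), if_neg hil]
        have hil1 : 1 ≤ i l := Nat.one_le_iff_ne_zero.mpr hil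
        have hsumge : i l ≤ ∑ j ∈ Finset.univ.erase t, i j :=
          Finset.single_le_sum (fun _ _ => Nat.zero_le _) hl
        have hsum'' : ∑ j ∈ Finset.univ.erase t, Function.update i l (i l - 1) j
            = (∑ j ∈ Finset.univ.erase t, i j) - 1 := by
          rw [Finset.sum_update_of_mem hl, ← Finset.erase_eq]
          have h5 := Finset.add_sum_erase (Finset.univ.erase t) i hl
          omega
        have ecoef : coef (Function.update m l (m l - 1)) t (Function.update i l (i l - 1))
            = (Nat.factorial (((∑ j ∈ Finset.univ.erase t, i j) - 1) + m t) : ℝ) /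
              ((Nat.factorial (m t) : ℝ)
                * ∏ j ∈ Finset.univ.erase t, (Nat.factorial (Function.update i l (i l - 1) j) : ℝ)) := by
          unfold coef
          rw [Function.update_of_ne (Ne.symm hlt), hsum'']
        have e1 : (∑ p, k p) - 1 = ((∑ j ∈ Finset.univ.erase t, i j) - 1) + m t := by omega
        have eprod'' : ∏ j ∈ Finset.univ.erase t, ((Nat.factorial (Function.update i l (i l - 1) j) : ℕ) : ℝ)
            = ((Nat.factorial (i l - 1) : ℕ) : ℝ)
              * ∏ j ∈ (Finset.univ.erase t).erase l, ((Nat.factorial (i j) : ℕ) : ℝ) := by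
          rw [← Finset.mul_prod_erase _ _ hl, Function.update_self]
          congr 1
          exact Finset.prod_congr rfl fun p hp => by
            rw [Function.update_of_ne (Finset.mem_erase.mp hp).1]
        have e2 : ∏ p, ((Nat.factorial (Function.update k l (k l - 1) p) : ℕ) : ℝ)
            = ((Nat.factorial (i l - 1) : ℕ) : ℝ) * (((Nat.factorial (m t) : ℕ) : ℝ)
              * ∏ j ∈ (Finset.univ.erase t).erase l, ((Nat.factorial (i j) : ℕ) : ℝ)) := by
          rw [← Finset.mul_prod_erase _ _ (Finset.mem_univ l)]
          have h6 : ∏ p ∈ Finset.univ.erase l, ((Nat.factorial (Function.update k l (k l - 1) p) : ℕ) : ℝ)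
              = ∏ p ∈ Finset.univ.erase l, ((Nat.factorial (k p) : ℕ) : ℝ) :=
            Finset.prod_congr rfl fun p hp => by
              rw [Function.update_of_ne (Finset.mem_erase.mp hp).1]
          rw [h6, Function.update_self, hkl]
          congr 1
          rw [← Finset.mul_prod_erase _ (fun p => ((Nat.factorial (k p) : ℕ) : ℝ))
              (Finset.mem_erase.mpr ⟨Ne.symm hlt, Finset.mem_univ t⟩), hkt,
            Finset.erase_right_comm]
          congr 1
          refine Finset.prod_congr rfl fun p hp => ?_
          rw [hkne p (Finset.mem_erase.mp (Finset.mem_of_mem_erase hp)).1]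
        have e3 : ∏ j ∈ Finset.univ.erase t, y j ^ (Function.update i l (i l - 1) j)
            = y l ^ (i l - 1) * ∏ j ∈ (Finset.univ.erase t).erase l, y j ^ i j := by
          rw [← Finset.mul_prod_erase _ _ hl, Function.update_self]
          congr 1
          exact Finset.prod_congr rfl fun p hp => by
            rw [Function.update_of_ne (Finset.mem_erase.mp hp).1]
        have e4 : ∏ j ∈ Finset.univ.erase t, y j ^ i j
            = (y l * y l ^ (i l - 1)) * ∏ j ∈ (Finset.univ.erase t).erase l, y j ^ i j := by
          rw [← Finset.mul_prod_erase _ _ hl]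
          congr 1
          conv_lhs => rw [show i l = (i l - 1) + 1 by omega, pow_succ]
          ring
        rw [ecoef, e1, e2, eprod'', e3, e4]
        ring

lemma T_rec (y : Fin n → ℝ) (m : Fin n → ℕ) (t : Fin n) :
    T y m t = (if m t = 0 then y t else y t * T y (Function.update m t (m t - 1)) t)
      + ∑ j ∈ Finset.univ.erase t,
          (if m j = 0 then 0 else y j * T y (Function.update m j (m j - 1)) t) := by
  have h0mem : (fun _ => 0 : Fin n → ℕ) ∈ Idx m t :=
    mem_Idx.mpr ⟨rfl, fun j _ => Nat.zero_le _⟩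
  rw [show T y m t = ∑ i ∈ Idx m t,
      ((if (∑ j ∈ Finset.univ.erase t, i j) + m t = 0 then y t else 0)
        + (if m t = 0 then 0 else
            y t * (coef (Function.update m t (m t - 1)) t i *
              (y t ^ ((Function.update m t (m t - 1)) t + 1)
                * ∏ j ∈ Finset.univ.erase t, y j ^ i j)))
        + ∑ j ∈ Finset.univ.erase t, (if i j = 0 then 0 else
            y j * (coef (Function.update m j (m j - 1)) t (Function.update i j (i j - 1)) *
              (y t ^ (m t + 1)
                * ∏ l ∈ Finset.univ.erase t, y l ^ (Function.update i j (i j - 1) l)))))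
    from Finset.sum_congr rfl fun i hi => key_term y m t i hi]
  rw [Finset.sum_add_distrib, Finset.sum_add_distrib]
  congr 1
  · -- pieces 1+2
    by_cases hmt : m t = 0
    · rw [if_pos hmt]
      rw [Finset.sum_eq_zero (fun i (_ : i ∈ Idx m t) => if_pos hmt :
        ∀ i ∈ Idx m t, (if m t = 0 then (0:ℝ) else
            y t * (coef (Function.update m t (m t - 1)) t i *
              (y t ^ ((Function.update m t (m t - 1)) t + 1)
                * ∏ j ∈ Finset.univ.erase t, y j ^ i j))) = 0), add_zero]
      rw [Finset.sum_congr rfl (fun i hi => show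
          (if (∑ j ∈ Finset.univ.erase t, i j) + m t = 0 then y t else 0)
            = if i = (fun _ => 0) then y t else 0 by
        congr 1
        obtain ⟨hit, hile⟩ := mem_Idx.mp hi
        simp only [hmt, Nat.add_zero, eq_iff_iff]
        constructor
        · intro hs
          funext j
          by_cases hj : j = t
          · rw [hj]; exact hit
          · exact (Finset.sum_eq_zero_iff.mp hs) j
              (Finset.mem_erase.mpr ⟨hj, Finset.mem_univ j⟩)
        · intro h
          rw [h]
          exact Finset.sum_const_zero)]
      rw [Finset.sum_ite_eq' (Idx m t) (fun _ => 0) (fun _ => y t), if_pos h0mem]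
    · rw [if_neg hmt]
      rw [Finset.sum_eq_zero (fun i (_ : i ∈ Idx m t) => if_neg (by omega) :
        ∀ i ∈ Idx m t, (if (∑ j ∈ Finset.univ.erase t, i j) + m t = 0
          then y t else (0:ℝ)) = 0), zero_add]
      rw [Finset.sum_congr rfl (fun i (_ : i ∈ Idx m t) => if_neg hmt), ← Finset.mul_sum]
      congr 1
      rw [T, Idx_update_self]
  · -- third piece
    rw [Finset.sum_comm]
    refine Finset.sum_congr rfl fun j hj => ?_
    have hjt : j ≠ t := (Finset.mem_erase.mp hj).1
    by_cases hmj : m j = 0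
    · rw [if_pos hmj]
      refine Finset.sum_eq_zero fun i hi => ?_
      have : i j = 0 := by
        have := (mem_Idx.mp hi).2 j hjt
        omega
      rw [if_pos this]
    · rw [if_neg hmj]
      have hshift := sum_idx_shift m t j hjt hmj (fun i => y j *
        (coef (Function.update m j (m j - 1)) t (Function.update i j (i j - 1)) *
          (y t ^ (m t + 1)
            * ∏ l ∈ Finset.univ.erase t, y l ^ (Function.update i j (i j - 1) l))))
      simp only [Function.update_self] at hshift
      rw [hshift, T, Finset.mul_sum]
      refine Finset.sum_congr rfl fun i hi => ?_
      have hcollapse : Function.update (Function.update i j (i j + 1)) j (i j + 1 - 1) = i := by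
        funext l
        by_cases hlj : l = j
        · subst hlj; simp
        · simp [Function.update_of_ne hlj]
      rw [hcollapse, Function.update_of_ne (Ne.symm hjt)]

noncomputable def A (y : Fin n → ℝ) (m : Fin n → ℕ) : ℝ := ∑ t, T y m t

lemma A_rec (y : Fin n → ℝ) (m : Fin n → ℕ) :
    A y m = ∑ j, (if m j = 0 then y j else y j * A y (Function.update m j (m j - 1))) := by
  unfold A
  rw [Finset.sum_congr rfl (fun t (_ : t ∈ Finset.univ) => T_rec y m t)]
  have hg : ∀ t : Fin n, ((if m t = 0 then y t else y t * T y (Function.update m t (m t - 1)) t)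
      + ∑ j ∈ Finset.univ.erase t,
          (if m j = 0 then 0 else y j * T y (Function.update m j (m j - 1)) t))
      = ∑ j, (if m j = 0 then (if j = t then y t else 0)
          else y j * T y (Function.update m j (m j - 1)) t) := by
    intro t
    rw [← Finset.add_sum_erase _ _ (Finset.mem_univ t)]
    congr 1
    · by_cases hmt : m t = 0
      · rw [if_pos hmt, if_pos hmt, if_pos rfl]
      · rw [if_neg hmt, if_neg hmt]
    · refine Finset.sum_congr rfl fun j hj => ?_
      by_cases hmj : m j = 0
      · rw [if_pos hmj, if_pos hmj, if_neg (Finset.mem_erase.mp hj).1]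
      · rw [if_neg hmj, if_neg hmj]
  rw [Finset.sum_congr rfl (fun t (_ : t ∈ Finset.univ) => hg t), Finset.sum_comm]
  refine Finset.sum_congr rfl fun j _ => ?_
  by_cases hmj : m j = 0
  · rw [if_pos hmj]
    rw [Finset.sum_congr rfl (fun t (_ : t ∈ Finset.univ) => if_pos hmj)]
    rw [Finset.sum_ite_eq Finset.univ j y, if_pos (Finset.mem_univ j)]
  · rw [if_neg hmj]
    rw [Finset.sum_congr rfl (fun t (_ : t ∈ Finset.univ) => if_neg hmj), ← Finset.mul_sum]

lemma A_eq_one (y : Fin n → ℝ) (hy : ∑ t, y t = 1) (m : Fin n → ℕ) : A y m = 1 := by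
  suffices key : ∀ N (m : Fin n → ℕ), (∑ j, m j) = N → A y m = 1 from key _ m rfl
  intro N
  induction N using Nat.strong_induction_on with
  | _ N ih =>
    intro m hm
    rw [A_rec]
    rw [Finset.sum_congr rfl (fun j (_ : j ∈ Finset.univ) => show
        (if m j = 0 then y j else y j * A y (Function.update m j (m j - 1))) = y j by
      by_cases hmj : m j = 0
      · rw [if_pos hmj]
      · rw [if_neg hmj]
        have hlt : (∑ l, Function.update m j (m j - 1) l) < N := by
          rw [← Finset.add_sum_erase _ _ (Finset.mem_univ j), Function.update_self,
            Finset.sum_congr rfl (fun l hl =>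
              show Function.update m j (m j - 1) l = m l from
                Function.update_of_ne (Finset.mem_erase.mp hl).1 _ _)]
          have h7 : m j + ∑ x ∈ Finset.univ.erase j, m x = N := by
            rw [Finset.add_sum_erase _ m (Finset.mem_univ j)]
            exact hm
          have h8 : (Finset.univ.erase j).sum m = ∑ x ∈ Finset.univ.erase j, m x := rfl
          omega
        rw [ih _ hlt _ rfl, mul_one])]
    exact hy


end NVH

theorem n_var_homogeneous (n : ℕ) (hn : 0 < n) (m : Fin n → ℕ) (x : Fin n → ℝ)
    (hx : ∀ t, x t ≠ 0)
    (hs : (∑ t, ∏ j ∈ Finset.univ.erase t, x j) ≠ 0) :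
    ∏ j, x j ^ (m j + 1)
      = ∑ t, ∑ i ∈ Fintype.piFinset (fun j => Finset.range (if j = t then 1 else m j + 1)),
          ((Nat.factorial ((∑ j ∈ Finset.univ.erase t, i j) + m t) : ℝ) /
            (Nat.factorial (m t) * ∏ j ∈ Finset.univ.erase t, Nat.factorial (i j))) *
          (∏ j ∈ Finset.univ.erase t, x j ^ (m j - i j + 1)) *
          ((∏ j, x j) / (∑ s, ∏ j ∈ Finset.univ.erase s, x j))
            ^ ((∑ j ∈ Finset.univ.erase t, i j) + m t + 1) := by
  classical
  have hP : (∏ j, x j) ≠ 0 := Finset.prod_ne_zero_iff.mpr fun j _ => hx j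
  set u : ℝ := (∏ j, x j) / (∑ t, ∏ j ∈ Finset.univ.erase t, x j) with hu
  set y : Fin n → ℝ := fun j => u / x j with hy'
  have hPdiv : ∀ t, (∏ j, x j) / x t = ∏ j ∈ Finset.univ.erase t, x j := by
    intro t
    rw [← Finset.mul_prod_erase _ x (Finset.mem_univ t), mul_comm, mul_div_assoc,
      div_self (hx t), mul_one]
  have hy : ∑ t, y t = 1 := by
    have h1 : ∀ t, y t = (∏ j ∈ Finset.univ.erase t, x j)
        / (∑ t, ∏ j ∈ Finset.univ.erase t, x j) := by
      intro t
      show u / x t = _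
      rw [hu, div_div, mul_comm, ← div_div, hPdiv t]
    rw [Finset.sum_congr rfl (fun t _ => h1 t), ← Finset.sum_div, div_self hs]
  have key : ∀ t : Fin n, ∀ i ∈ NVH.Idx m t,
      ((Nat.factorial ((∑ j ∈ Finset.univ.erase t, i j) + m t) : ℝ) /
            (Nat.factorial (m t) * ∏ j ∈ Finset.univ.erase t, Nat.factorial (i j))) *
          (∏ j ∈ Finset.univ.erase t, x j ^ (m j - i j + 1)) *
          u ^ ((∑ j ∈ Finset.univ.erase t, i j) + m t + 1)
        = (∏ j, x j ^ (m j + 1)) * (NVH.coef m t i *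
            (y t ^ (m t + 1) * ∏ j ∈ Finset.univ.erase t, y j ^ i j)) := by
    intro t i hi
    obtain ⟨hit, hile⟩ := NVH.mem_Idx.mp hi
    have e1 : ∏ j ∈ Finset.univ.erase t, x j ^ (m j - i j + 1)
        = (∏ j ∈ Finset.univ.erase t, x j ^ (m j + 1))
          / (∏ j ∈ Finset.univ.erase t, x j ^ i j) := by
      rw [← Finset.prod_div_distrib]
      refine Finset.prod_congr rfl fun j hj => ?_
      rw [div_eq_mul_inv, ← pow_sub₀ _ (hx j)
        (show i j ≤ m j + 1 by have := hile j (Finset.mem_erase.mp hj).1; omega)]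
      congr 1
      have := hile j (Finset.mem_erase.mp hj).1
      omega
    have e2 : y t ^ (m t + 1) = u ^ (m t + 1) / x t ^ (m t + 1) := by
      simp only [hy']
      exact div_pow _ _ _
    have e3 : ∏ j ∈ Finset.univ.erase t, y j ^ i j
        = (u ^ (∑ j ∈ Finset.univ.erase t, i j)) / ∏ j ∈ Finset.univ.erase t, x j ^ i j := by
      rw [← Finset.prod_pow_eq_pow_sum, ← Finset.prod_div_distrib]
      refine Finset.prod_congr rfl fun j hj => ?_
      simp only [hy']
      exact div_pow _ _ _
    have e4 : ∏ j, x j ^ (m j + 1)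
        = x t ^ (m t + 1) * ∏ j ∈ Finset.univ.erase t, x j ^ (m j + 1) :=
      (Finset.mul_prod_erase _ _ (Finset.mem_univ t)).symm
    have e5 : u ^ ((∑ j ∈ Finset.univ.erase t, i j) + m t + 1)
        = u ^ (∑ j ∈ Finset.univ.erase t, i j) * u ^ (m t + 1) := by
      rw [← pow_add, Nat.add_assoc]
    have hxt : x t ^ (m t + 1) ≠ 0 := pow_ne_zero _ (hx t)
    have hXi : (∏ j ∈ Finset.univ.erase t, x j ^ i j) ≠ 0 :=
      Finset.prod_ne_zero_iff.mpr fun j _ => pow_ne_zero _ (hx j)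
    rw [e1, e2, e3, e4, e5, NVH.coef]
    field_simp
    push_cast
    ring
  calc ∏ j, x j ^ (m j + 1)
      = (∏ j, x j ^ (m j + 1)) * NVH.A y m := by
        rw [NVH.A_eq_one y hy m, mul_one]
    _ = _ := by
        rw [NVH.A, Finset.mul_sum]
        refine Finset.sum_congr rfl fun t _ => ?_
        rw [NVH.T, Finset.mul_sum]
        exact Finset.sum_congr rfl fun i hi => (key t i hi).symm
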